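/- Let H be a complex Hilbert space and let (P,Q) be a quasi-projection pair on H. Then ‖(1−P)Q‖ = ‖Q(1−P)‖ and ‖(1−Q)P‖ = ‖P(1−Q)‖, and moreover ‖(P−Q)²‖ ≤ max{‖(1−P)Q‖, ‖(1−Q)P‖} ≤ ‖P−Q‖. -/

import Mathlib

noncomputable section

variable {H : Type*} [NormedAddCommGroup H] [InnerProductSpace ℂ H] [CompleteSpace H]


lemma qpp_pow_add_of_mul_eq_zero {R : Type*} [Ring R] {x y : R} (h : y * x = 0) (n : ℕ) :
    (x + y) ^ n = ∑ j ∈ Finset.range (n + 1), x ^ j * y ^ (n - j) := by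
  induction n with
  | zero => simp
  | succ n ih =>
    rw [pow_succ', ih, Finset.mul_sum]
    have h1 : ∀ j ∈ Finset.range (n + 1), (x + y) * (x ^ j * y ^ (n - j))
        = x ^ (j+1) * y ^ (n - j) + (if j = 0 then y ^ (n + 2 - (j+1)) else 0) := by
      intro j hj
      rcases Nat.eq_zero_or_pos j with rfl | hjpos
      · simp [add_mul, pow_succ']
      · have hx : y * x ^ j = 0 := by
          cases j with
          | zero => omega
          | succ i => rw [pow_succ', ← mul_assoc, h, zero_mul]
        rw [if_neg (Nat.pos_iff_ne_zero.mp hjpos), add_mul]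
        rw [← mul_assoc y, hx, zero_mul, add_zero, pow_succ', mul_assoc, add_zero]
    rw [Finset.sum_congr rfl h1, Finset.sum_add_distrib, Finset.sum_ite_eq'
      (Finset.range (n+1)) 0]
    simp only [Finset.mem_range, Nat.succ_pos, if_pos, Nat.add_sub_cancel]
    rw [Finset.sum_range_succ' (fun j => x ^ j * y ^ (n + 1 - j)) (n+1)]
    congr 1
    · apply Finset.sum_congr rfl
      intro j hj
      have he : n + 1 - (j + 1) = n - j := by omega
      rw [he]
    · simp

lemma qpp_norm_pow_le {E : Type*} [NormedRing E] (h1 : ‖(1 : E)‖ ≤ 1) (a : E) (n : ℕ) :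
    ‖a ^ n‖ ≤ ‖a‖ ^ n := by
  induction n with
  | zero => simpa using h1
  | succ n ih =>
    rw [pow_succ, pow_succ]
    calc ‖a ^ n * a‖ ≤ ‖a ^ n‖ * ‖a‖ := norm_mul_le _ _
      _ ≤ ‖a‖ ^ n * ‖a‖ :=
        mul_le_mul_of_nonneg_right ih (norm_nonneg _)

lemma qpp_real_aux {t m : ℝ} (hm : 0 ≤ m) (ht : 0 ≤ t)
    (h : ∀ k : ℕ, t ^ (2 * 2 ^ k) ≤ ((2 * 2 ^ k : ℕ) : ℝ) * m ^ (2 * 2 ^ k - 1) * t) :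
    t ≤ m := by
  by_contra hc
  push_neg at hc
  have ht0 : 0 < t := lt_of_le_of_lt hm hc
  have key : ∀ k : ℕ, t ^ (2 * 2 ^ k - 1) ≤ ((2 * 2 ^ k : ℕ) : ℝ) * m ^ (2 * 2 ^ k - 1) := by
    intro k
    have h2 : t ^ (2 * 2 ^ k) = t ^ (2 * 2 ^ k - 1) * t := by
      rw [← pow_succ]
      congr 1
      have : 0 < 2 * 2 ^ k := by positivity
      omega
    have := h k
    rw [h2] at this
    exact le_of_mul_le_mul_right this ht0
  rcases eq_or_lt_of_le hm with rfl | hm0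
  · have h0 := key 0
    norm_num at h0
    linarith
  · set r : ℝ := t / m with hr
    have hr1 : 1 < r := (one_lt_div hm0).mpr hc
    set e : ℝ := r - 1 with he
    have he0 : 0 < e := by simp only [he]; linarith
    have hbern : ∀ n : ℕ, (n : ℝ) * e ≤ r ^ n := by
      intro n
      have hb := one_add_mul_le_pow (by linarith : (-2:ℝ) ≤ e) n
      have hre : 1 + e = r := by simp [he]
      rw [hre] at hb
      linarith
    obtain ⟨M, hM⟩ := exists_nat_gt (2 / e ^ 2 + 1)
    have hq : (M : ℝ) + 1 ≤ ((2 ^ M : ℕ) : ℝ) := by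
      have := Nat.lt_two_pow_self (n := M)
      exact_mod_cast this
    set q : ℕ := 2 ^ M with hqdef
    have hq1 : 1 ≤ q := Nat.one_le_two_pow
    have hqR : (2 / e ^ 2 + 1) < (q : ℝ) := lt_of_lt_of_le hM (le_trans (by linarith) hq)
    have hup : r ^ (2 * q - 1) ≤ ((2 * q : ℕ) : ℝ) := by
      have hkey := key M
      have hmp : 0 < m ^ (2 * q - 1) := pow_pos hm0 _
      have hdiv : r ^ (2 * q - 1) = t ^ (2 * q - 1) / m ^ (2 * q - 1) := by
        rw [hr, div_pow]
      rw [hdiv, div_le_iff₀ hmp]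
      exact hkey
    have hsplit : 2 * q - 1 = q + (q - 1) := by omega
    have hlow : ((q : ℝ) * e) * (((q : ℝ) - 1) * e) ≤ r ^ (2 * q - 1) := by
      rw [hsplit, pow_add]
      have b1 := hbern q
      have b2 := hbern (q - 1)
      have hcast : ((q - 1 : ℕ) : ℝ) = (q : ℝ) - 1 := by
        push_cast [hq1]; ring
      rw [hcast] at b2
      have hq1R : (1 : ℝ) ≤ (q : ℝ) := by exact_mod_cast hq1
      apply mul_le_mul b1 b2 (by nlinarith) (le_trans (by nlinarith) b1)
    have he2 : (0:ℝ) < e ^ 2 := by positivity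
    have h1 : 2 < ((q:ℝ) - 1) * e ^ 2 :=
      (div_lt_iff₀ he2).mp (by linarith : 2 / e^2 < (q:ℝ) - 1)
    have hq0R : (0:ℝ) < q := by positivity
    have h2 := mul_lt_mul_of_pos_left h1 hq0R
    have hfin : ((2 * q : ℕ) : ℝ) < ((q : ℝ) * e) * (((q : ℝ) - 1) * e) := by
      push_cast
      nlinarith [h2]
    linarith

/-- For a quasi-projection pair `(P, Q)`: `‖(1-P)Q‖ = ‖Q(1-P)‖`, `‖(1-Q)P‖ = ‖P(1-Q)‖`,
and `‖(P-Q)²‖ ≤ max {‖(1-P)Q‖, ‖(1-Q)P‖} ≤ ‖P-Q‖`. -/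
theorem quasiProjectionPair_norm_ineq (P Q : H →L[ℂ] H)
    (hPsa : IsSelfAdjoint P) (hPidem : IsIdempotentElem P) (hQidem : IsIdempotentElem Q)
    (hqpp : star Q = (2 * P - 1) * Q * (2 * P - 1)) :
    ‖(1 - P) * Q‖ = ‖Q * (1 - P)‖ ∧ ‖(1 - Q) * P‖ = ‖P * (1 - Q)‖ ∧
    ‖(P - Q) * (P - Q)‖ ≤ max ‖(1 - P) * Q‖ ‖(1 - Q) * P‖ ∧
    max ‖(1 - P) * Q‖ ‖(1 - Q) * P‖ ≤ ‖P - Q‖ := by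
  have hP : P * P = P := hPidem
  have hQ : Q * Q = Q := hQidem
  have hsP : star P = P := hPsa
  set U : H →L[ℂ] H := 2 * P - 1 with hU
  -- basic facts about U
  have hUstar : star U = U := by
    rw [hU, star_sub, star_one, star_mul, hsP, star_ofNat]
    noncomm_ring
  have hUU : U * U = 1 := by
    have e1 : U * U = 2 * 2 * (P * P) - 2 * P - 2 * P + 1 := by rw [hU]; noncomm_ring
    rw [e1, hP]; noncomm_ring
  have hone : ‖(1 : H →L[ℂ] H)‖ ≤ 1 := ContinuousLinearMap.norm_id_le
  have hnU : ‖U‖ ≤ 1 := by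
    have h2 : ‖U‖ * ‖U‖ ≤ 1 := by
      calc ‖U‖ * ‖U‖ = ‖star U * U‖ := (CStarRing.norm_star_mul_self).symm
        _ = ‖(1 : H →L[ℂ] H)‖ := by rw [hUstar, hUU]
        _ ≤ 1 := hone
    nlinarith [norm_nonneg U]
  have hnUl : ∀ a : H →L[ℂ] H, ‖U * a‖ = ‖a‖ := by
    intro a
    apply le_antisymm
    · calc ‖U * a‖ ≤ ‖U‖ * ‖a‖ := norm_mul_le _ _
        _ ≤ 1 * ‖a‖ := mul_le_mul_of_nonneg_right hnU (norm_nonneg a)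
        _ = ‖a‖ := one_mul _
    · conv_lhs => rw [← one_mul a, ← hUU, mul_assoc]
      calc ‖U * (U * a)‖ ≤ ‖U‖ * ‖U * a‖ := norm_mul_le _ _
        _ ≤ 1 * ‖U * a‖ := mul_le_mul_of_nonneg_right hnU (norm_nonneg _)
        _ = ‖U * a‖ := one_mul _
  have hnUr : ∀ a : H →L[ℂ] H, ‖a * U‖ = ‖a‖ := by
    intro a
    apply le_antisymm
    · calc ‖a * U‖ ≤ ‖a‖ * ‖U‖ := norm_mul_le _ _
        _ ≤ ‖a‖ * 1 := mul_le_mul_of_nonneg_left hnU (norm_nonneg a)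
        _ = ‖a‖ := mul_one _
    · conv_lhs => rw [← mul_one a, ← hUU, ← mul_assoc]
      calc ‖a * U * U‖ ≤ ‖a * U‖ * ‖U‖ := norm_mul_le _ _
        _ ≤ ‖a * U‖ * 1 := mul_le_mul_of_nonneg_left hnU (norm_nonneg _)
        _ = ‖a * U‖ := mul_one _
  have hsQ : star Q = U * Q * U := hqpp
  have hPU : P * U = P := by
    have e1 : P * U = 2 * (P * P) - P := by rw [hU]; noncomm_ring
    rw [e1, hP]; noncomm_ring
  have hUP : U * P = P := by
    have e1 : U * P = 2 * (P * P) - P := by rw [hU]; noncomm_ring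
    rw [e1, hP]; noncomm_ring
  have hU1P : U * (1 - P) = -(1 - P) := by
    have e1 : U * (1 - P) = 3 * P - 2 * (P * P) - 1 := by rw [hU]; noncomm_ring
    rw [e1, hP]; noncomm_ring
  have h1PU : (1 - P) * U = -(1 - P) := by
    have e1 : (1 - P) * U = 3 * P - 2 * (P * P) - 1 := by rw [hU]; noncomm_ring
    rw [e1, hP]; noncomm_ring
  have hQU : Q * U = U * star Q := by
    rw [hsQ, ← mul_assoc, ← mul_assoc, hUU, one_mul]
  have hs1P : star ((1 : H →L[ℂ] H) - P) = 1 - P := by rw [star_sub, star_one, hsP]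
  -- Part 1
  have part1 : ‖(1 - P) * Q‖ = ‖Q * (1 - P)‖ := by
    calc ‖(1 - P) * Q‖ = ‖star ((1 - P) * Q)‖ := (norm_star _).symm
      _ = ‖star Q * (1 - P)‖ := by rw [star_mul, hs1P]
      _ = ‖U * (Q * (U * (1 - P)))‖ := by rw [hsQ, mul_assoc, mul_assoc]
      _ = ‖Q * (U * (1 - P))‖ := hnUl _
      _ = ‖Q * (1 - P)‖ := by rw [hU1P, mul_neg, norm_neg]
  -- Part 2
  have part2 : ‖(1 - Q) * P‖ = ‖P * (1 - Q)‖ := by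
    have e2 : P * (1 - star Q) * U = P * (1 - Q) := by
      rw [hsQ]
      have e3 : P * (1 - U * Q * U) * U = P * U - ((P * U) * Q) * (U * U) := by
        noncomm_ring
      rw [e3, hUU, hPU, mul_one]
      noncomm_ring
    calc ‖(1 - Q) * P‖ = ‖star ((1 - Q) * P)‖ := (norm_star _).symm
      _ = ‖P * (1 - star Q)‖ := by rw [star_mul, hsP, star_sub, star_one]
      _ = ‖P * (1 - star Q) * U‖ := (hnUr _).symm
      _ = ‖P * (1 - Q)‖ := by rw [e2]
  -- Part 4
  have hn1P : ‖(1 : H →L[ℂ] H) - P‖ ≤ 1 := by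
    have hid : ((1 : H →L[ℂ] H) - P) * (1 - P) = 1 - P := by
      have e1 : ((1 : H →L[ℂ] H) - P) * (1 - P) = 1 - P - P + P * P := by noncomm_ring
      rw [e1, hP]; noncomm_ring
    have h2 : ‖(1 : H →L[ℂ] H) - P‖ * ‖(1 : H →L[ℂ] H) - P‖ = ‖(1 : H →L[ℂ] H) - P‖ := by
      conv_lhs => rw [← CStarRing.norm_star_mul_self (x := (1 : H →L[ℂ] H) - P)]
      rw [hs1P, hid]
    nlinarith [norm_nonneg ((1 : H →L[ℂ] H) - P)]
  have hnP : ‖P‖ ≤ 1 := by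
    have h2 : ‖P‖ * ‖P‖ = ‖P‖ := by
      conv_lhs => rw [← CStarRing.norm_star_mul_self (x := P)]
      rw [hsP, hP]
    nlinarith [norm_nonneg P]
  have part4a : ‖(1 - P) * Q‖ ≤ ‖P - Q‖ := by
    have e1 : (1 - P) * Q = (1 - P) * (Q - P) := by
      have e2 : ((1 : H →L[ℂ] H) - P) * (Q - P) = (1 - P) * Q - P + P * P := by noncomm_ring
      rw [e2, hP]; noncomm_ring
    calc ‖(1 - P) * Q‖ = ‖(1 - P) * (Q - P)‖ := by rw [e1]
      _ ≤ ‖(1 : H →L[ℂ] H) - P‖ * ‖Q - P‖ := norm_mul_le _ _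
      _ ≤ 1 * ‖Q - P‖ := mul_le_mul_of_nonneg_right hn1P (norm_nonneg _)
      _ = ‖P - Q‖ := by rw [one_mul, norm_sub_rev]
  have part4b : ‖(1 - Q) * P‖ ≤ ‖P - Q‖ := by
    have e1 : (1 - Q) * P = (P - Q) * P := by
      have e2 : (P - Q) * P = P * P - Q * P := by noncomm_ring
      rw [e2, hP]; noncomm_ring
    calc ‖(1 - Q) * P‖ = ‖(P - Q) * P‖ := by rw [e1]
      _ ≤ ‖P - Q‖ * ‖P‖ := norm_mul_le _ _
      _ ≤ ‖P - Q‖ * 1 := mul_le_mul_of_nonneg_left hnP (norm_nonneg _)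
      _ = ‖P - Q‖ := mul_one _
  -- Part 3
  set A : H →L[ℂ] H := (1 - P) * Q with hA
  set B : H →L[ℂ] H := (1 - Q) * P with hB
  set T : H →L[ℂ] H := (P - Q) * (P - Q) with hT
  set A' : H →L[ℂ] H := (1 - P) * star Q with hA'
  set m : ℝ := max ‖A‖ ‖B‖ with hm
  have hm0 : 0 ≤ m := le_trans (norm_nonneg A) (le_max_left _ _)
  have hA'A : ‖A'‖ = ‖A‖ := by
    have e1 : A' = star (Q * (1 - P)) := by rw [star_mul, hs1P, hA']
    rw [e1, norm_star, ← part1]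
  have hP1P : P * (1 - P) = 0 := by rw [mul_sub, mul_one, hP, sub_self]
  have hBA' : B * A' = 0 := by
    have e1 : B * A' = (1 - Q) * (P * (1 - P)) * star Q := by
      rw [hB, hA']; noncomm_ring
    rw [e1, hP1P, mul_zero, zero_mul]
  have hTAB : T = A + B := by
    have e1 : (P - Q) * (P - Q) = P * P - P * Q - Q * P + Q * Q := by noncomm_ring
    have e2 : (1 - P) * Q + (1 - Q) * P = Q - P * Q - Q * P + P := by noncomm_ring
    rw [hT, hA, hB, e1, e2, hP, hQ]; noncomm_ring
  have hAU : A * U = -A' := by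
    rw [hA, hA', mul_assoc, hQU, ← mul_assoc, h1PU, neg_mul]
  have hBU : B * U = B := by rw [hB, mul_assoc, hPU]
  have hTU : T * U = -A' + B := by
    rw [hTAB, add_mul, hAU, hBU]
  have hUPU : U * P * U = P := by rw [hUP, hPU]
  have hsPQ : star (P - Q) = U * (P - Q) * U := by
    have e1 : U * (P - Q) * U = U * P * U - U * Q * U := by noncomm_ring
    rw [star_sub, hsP, hsQ, e1, hUPU]
  have hsT : star T = U * T * U := by
    have e1 : star T = star (P - Q) * star (P - Q) := by rw [hT, star_mul]
    have e2 : (U * (P - Q) * U) * (U * (P - Q) * U)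
        = U * ((P - Q) * ((U * U) * ((P - Q) * U))) := by noncomm_ring
    rw [e1, hsPQ, e2, hUU, one_mul, hT]
    noncomm_ring
  have hS2 : star T * T = (U * T) * (U * T) := by
    rw [hsT, mul_assoc]
  -- (U*T)^(n+1) = U * ((T*U)^n * T)
  have hUTpow : ∀ n : ℕ, (U * T) ^ (n + 1) = U * ((T * U) ^ n * T) := by
    intro n
    induction n with
    | zero => simp
    | succ n ih =>
      rw [pow_succ, ih, pow_succ]
      simp only [mul_assoc]
  have hSpow : ∀ n : ℕ, (star T * T) ^ (n + 1) = U * ((T * U) ^ (2 * n + 1) * T) := by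
    intro n
    have e1 : (star T * T) ^ (n + 1) = (U * T) ^ (2 * (n + 1)) := by
      rw [hS2, ← sq, ← pow_mul, mul_comm 2 (n+1), pow_mul, sq]
    have e2 : 2 * (n + 1) = (2 * n + 1) + 1 := by ring
    rw [e1, e2, hUTpow]
  -- norm bound on (T*U)^n
  have hTUn : ∀ n : ℕ, ‖(T * U) ^ n‖ ≤ (n + 1 : ℝ) * m ^ n := by
    intro n
    have hA'm : ‖-A'‖ ≤ m := by rw [norm_neg, hA'A]; exact le_max_left _ _
    have hBm : ‖B‖ ≤ m := le_max_right _ _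
    have hyx : B * (-A') = 0 := by rw [mul_neg, hBA', neg_zero]
    rw [hTU, qpp_pow_add_of_mul_eq_zero hyx n]
    calc ‖∑ j ∈ Finset.range (n + 1), (-A') ^ j * B ^ (n - j)‖
        ≤ ∑ j ∈ Finset.range (n + 1), ‖(-A') ^ j * B ^ (n - j)‖ := norm_sum_le _ _
      _ ≤ ∑ j ∈ Finset.range (n + 1), m ^ n := by
          apply Finset.sum_le_sum
          intro j hj
          rw [Finset.mem_range] at hj
          have hj' : j ≤ n := Nat.lt_succ_iff.mp hj
          calc ‖(-A') ^ j * B ^ (n - j)‖ ≤ ‖(-A') ^ j‖ * ‖B ^ (n - j)‖ := norm_mul_le _ _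
            _ ≤ ‖-A'‖ ^ j * ‖B‖ ^ (n - j) :=
              mul_le_mul (qpp_norm_pow_le hone _ _) (qpp_norm_pow_le hone _ _)
                (norm_nonneg _) (pow_nonneg (norm_nonneg _) _)
            _ ≤ m ^ j * m ^ (n - j) :=
              mul_le_mul (pow_le_pow_left₀ (norm_nonneg _) hA'm _)
                (pow_le_pow_left₀ (norm_nonneg _) hBm _)
                (pow_nonneg (norm_nonneg _) _) (pow_nonneg hm0 _)
            _ = m ^ n := by rw [← pow_add]; congr 1; omega
      _ = (n + 1 : ℝ) * m ^ n := by
          rw [Finset.sum_const, Finset.card_range, nsmul_eq_mul]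
          push_cast; ring
  -- selfadjointness of star T * T
  have hSsa : IsSelfAdjoint (star T * T) := IsSelfAdjoint.star_mul_self T
  have hSnorm : ‖star T * T‖ = ‖T‖ * ‖T‖ := CStarRing.norm_star_mul_self
  -- the key estimate
  have hkey : ∀ k : ℕ, ‖T‖ ^ (2 * 2 ^ k) ≤ ((2 * 2 ^ k : ℕ) : ℝ) * m ^ (2 * 2 ^ k - 1) * ‖T‖ := by
    intro k
    have e0 : (2 : ℕ) ^ k = (2 ^ k - 1) + 1 := by
      have : 1 ≤ 2 ^ k := Nat.one_le_two_pow
      omega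
    have e1 : ‖(star T * T) ^ 2 ^ k‖ = ‖star T * T‖ ^ 2 ^ k := by
      have hnn := hSsa.nnnorm_pow_two_pow k
      rw [← coe_nnnorm, ← coe_nnnorm, hnn, NNReal.coe_pow]
    have e2 : ‖T‖ ^ (2 * 2 ^ k) = ‖(star T * T) ^ 2 ^ k‖ := by
      rw [e1, hSnorm, ← sq, ← pow_mul]
    have e3 : (star T * T) ^ 2 ^ k = U * ((T * U) ^ (2 * (2 ^ k - 1) + 1) * T) := by
      conv_lhs => rw [e0]
      exact hSpow _
    have e4 : 2 * (2 ^ k - 1) + 1 = 2 * 2 ^ k - 1 := by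
      have : 1 ≤ 2 ^ k := Nat.one_le_two_pow
      omega
    rw [e2, e3, e4, hnUl]
    calc ‖(T * U) ^ (2 * 2 ^ k - 1) * T‖
        ≤ ‖(T * U) ^ (2 * 2 ^ k - 1)‖ * ‖T‖ := norm_mul_le _ _
      _ ≤ (((2 * 2 ^ k - 1 : ℕ) : ℝ) + 1) * m ^ (2 * 2 ^ k - 1) * ‖T‖ :=
          mul_le_mul_of_nonneg_right (hTUn _) (norm_nonneg _)
      _ = ((2 * 2 ^ k : ℕ) : ℝ) * m ^ (2 * 2 ^ k - 1) * ‖T‖ := by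
          have h1 : 1 ≤ 2 * 2 ^ k := by
            have := Nat.one_le_two_pow (n := k); omega
          have h2 : ((2 * 2 ^ k - 1 : ℕ) : ℝ) + 1 = ((2 * 2 ^ k : ℕ) : ℝ) := by
            push_cast [h1]; ring
          rw [h2]
  have part3 : ‖T‖ ≤ m := qpp_real_aux hm0 (norm_nonneg T) hkey
  exact ⟨part1, part2, part3, max_le part4a part4b⟩

end
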